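/- Let (X,d) be a totally bounded bounded metric space and F a finite family of self-maps which is globally contracting: sup_{f ∈ F^{≥n}} diam_d(f(X)) → 0 as n → ∞. Then the pseudometric d̂(x,y) = sup_n max_{f∈F^n} α_n d(f(x),f(y)) (for a fixed increasing sequence 1 = α_0 ≤ α_n ≤ 2) is totally bounded. -/

import Mathlib

open Filter Topology ENNReal

/-- The set `F^n` of all compositions of `n` members of a family `F` of self-maps. -/
def comps {X : Type*} (F : Set (X → X)) : ℕ → Set (X → X)
  | 0 => {id}
  | n + 1 => Set.image2 (· ∘ ·) (comps F n) F

lemma comps_finite {X : Type*} {F : Set (X → X)} (hfin : F.Finite) :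
    ∀ n, (comps F n).Finite
  | 0 => Set.finite_singleton id
  | n + 1 => Set.Finite.image2 _ (comps_finite hfin n) hfin

/-- Simultaneous net lemma: for a finite family `G` of self-maps of a totally bounded
space, there is a finite set `S` such that every point is `δ`-close w.r.t. all pullback
pseudometrics simultaneously. -/
lemma exists_net {X : Type*} [MetricSpace X] (htb : TotallyBounded (Set.univ : Set X))
    {G : Set (X → X)} (hG : G.Finite) :
    ∀ δ : ℝ≥0∞, 0 < δ → δ ≠ ⊤ →
      ∃ S : Set X, S.Finite ∧ ∀ x : X, ∃ y ∈ S, ∀ f ∈ G, edist (f x) (f y) < δ := by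
  refine Set.Finite.induction_on
    (motive := fun G _ => ∀ δ : ℝ≥0∞, 0 < δ → δ ≠ ⊤ →
      ∃ S : Set X, S.Finite ∧ ∀ x : X, ∃ y ∈ S, ∀ f ∈ G, edist (f x) (f y) < δ)
    G hG ?_ ?_
  · intro δ hδ0 _
    by_cases hne : Nonempty X
    · exact ⟨{Classical.arbitrary X}, Set.finite_singleton _,
        fun x => ⟨Classical.arbitrary X, rfl, fun f hf => hf.elim⟩⟩
    · exact ⟨∅, Set.finite_empty, fun x => (hne ⟨x⟩).elim⟩
  · intro a s ha hsfin IH δ hδ0 hδt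
    have hδ3 : 0 < δ / 3 := ENNReal.div_pos hδ0.ne' (by norm_num)
    have hδ3t : δ / 3 ≠ ⊤ := (ENNReal.div_lt_top hδt (by norm_num)).ne
    have h33 : δ / 3 + δ / 3 ≤ δ := by
      calc δ / 3 + δ / 3 ≤ δ / 3 + δ / 3 + δ / 3 := le_self_add
        _ = δ := ENNReal.add_thirds δ
    classical
    obtain ⟨S', hS'fin, hS'⟩ := IH (δ / 3) hδ3 hδ3t
    obtain ⟨t, htfin, htcov⟩ := EMetric.totallyBounded_iff.mp htb (δ / 3) hδ3
    set A : X → X → Set X := fun y c =>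
      {z | (∀ f ∈ s, edist (f z) (f y) < δ / 3) ∧ edist (a z) c < δ / 3} with hA
    set r : X × X → X := fun p =>
      if h : (A p.1 p.2).Nonempty then h.some else p.1 with hr
    refine ⟨r '' (S' ×ˢ t), ((hS'fin.prod htfin).image r), fun x => ?_⟩
    obtain ⟨y, hyS, hy⟩ := hS' x
    obtain ⟨c, hct, hxc⟩ := Set.mem_iUnion₂.mp (htcov (Set.mem_univ (a x)))
    have hne : (A y c).Nonempty := ⟨x, hy, EMetric.mem_ball.mp hxc⟩
    refine ⟨r (y, c), Set.mem_image_of_mem r (Set.mk_mem_prod hyS hct), ?_⟩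
    have hz : r (y, c) ∈ A y c := by
      rw [hr]; simp only [dif_pos hne]; exact hne.some_mem
    obtain ⟨hz1, hz2⟩ := hz
    intro f hf
    rcases hf with rfl | hf
    · calc edist (f x) (f (r (y, c))) ≤ edist (f x) c + edist c (f (r (y, c))) :=
            edist_triangle _ _ _
        _ < δ / 3 + δ / 3 := ENNReal.add_lt_add (EMetric.mem_ball.mp hxc)
            (by rw [edist_comm]; exact hz2)
        _ ≤ δ := h33
    · calc edist (f x) (f (r (y, c))) ≤ edist (f x) (f y) + edist (f y) (f (r (y, c))) :=
            edist_triangle _ _ _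
        _ < δ / 3 + δ / 3 := ENNReal.add_lt_add (hy f hf)
            (by rw [edist_comm]; exact hz1 f hf)
        _ ≤ δ := h33

/-- If `(X,d)` is a totally bounded bounded metric space and `F` is a globally contracting
finite family of self-maps, then the pseudometric
`d̂(x,y) = sup_n max_{f ∈ F^n} α_n · d(f x, f y)` is totally bounded. -/
theorem dhat_totally_bounded {X : Type*} [MetricSpace X]
    (hbd : EMetric.diam (Set.univ : Set X) ≠ ⊤)
    (htb : TotallyBounded (Set.univ : Set X))
    (F : Set (X → X)) (hfin : F.Finite)
    (hgc : Tendsto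
      (fun n => ⨆ m, ⨆ (_ : n ≤ m), ⨆ f ∈ comps F m, EMetric.diam (f '' (Set.univ : Set X)))
      atTop (𝓝 0))
    (α : ℕ → ℝ≥0∞) (hα0 : α 0 = 1) (hαmono : StrictMono α) (hα2 : ∀ n, α n ≤ 2) :
    let dhat : X → X → ℝ≥0∞ := fun x y => ⨆ n, ⨆ f ∈ comps F n, α n * edist (f x) (f y)
    ∀ ε : ℝ≥0∞, 0 < ε → ∃ S : Set X, S.Finite ∧ ∀ x : X, ∃ y ∈ S, dhat x y < ε := by
  intro dhat ε hε
  -- choose δ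
  set δ : ℝ≥0∞ := min (ε / 3) 1 with hδdef
  have hδ0 : 0 < δ := lt_min (ENNReal.div_pos hε.ne' (by norm_num)) one_pos
  have hδt : δ ≠ ⊤ := (lt_of_le_of_lt (min_le_right _ _) one_lt_top).ne
  have h2δε : 2 * δ < ε := by
    have h23 : 2 * δ < 3 * δ :=
      (ENNReal.mul_lt_mul_iff_left hδ0.ne' hδt).mpr (by norm_num)
    have h3δ : 3 * δ ≤ ε := by
      calc 3 * δ ≤ 3 * (ε / 3) := by
            exact mul_le_mul_right (min_le_left _ _) 3
        _ ≤ ε := ENNReal.mul_div_le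
    exact lt_of_lt_of_le h23 h3δ
  -- choose k controlling the tail
  have hev := hgc.eventually_lt_const hδ0
  obtain ⟨k, hk⟩ := hev.exists
  -- net for all maps of level < k
  have hGfin : (⋃ n ∈ Finset.range k, comps F n).Finite :=
    Set.Finite.biUnion (Finset.range k).finite_toSet (fun n _ => comps_finite hfin n)
  obtain ⟨S, hSfin, hS⟩ := exists_net htb hGfin δ hδ0 hδt
  refine ⟨S, hSfin, fun x => ?_⟩
  obtain ⟨y, hyS, hy⟩ := hS x
  refine ⟨y, hyS, lt_of_le_of_lt ?_ h2δε⟩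
  refine iSup_le fun n => iSup_le fun f => iSup_le fun hf => ?_
  rcases lt_or_ge n k with hn | hn
  · -- small levels: use the net
    have hfG : f ∈ ⋃ m ∈ Finset.range k, comps F m :=
      Set.mem_biUnion (Finset.mem_range.mpr hn) hf
    calc α n * edist (f x) (f y) ≤ 2 * edist (f x) (f y) :=
          mul_le_mul_left (hα2 n) _
      _ ≤ 2 * δ := mul_le_mul_right (hy f hfG).le 2
  · -- large levels: use global contraction
    have hd : edist (f x) (f y) ≤ EMetric.diam (f '' (Set.univ : Set X)) :=
      EMetric.edist_le_diam_of_mem ⟨x, Set.mem_univ x, rfl⟩ ⟨y, Set.mem_univ y, rfl⟩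
    have hd2 : EMetric.diam (f '' (Set.univ : Set X)) ≤
        ⨆ m, ⨆ (_ : k ≤ m), ⨆ g ∈ comps F m, EMetric.diam (g '' (Set.univ : Set X)) := by
      refine le_iSup_of_le n (le_iSup_of_le hn ?_)
      exact le_iSup₂_of_le f hf le_rfl
    calc α n * edist (f x) (f y) ≤ 2 * edist (f x) (f y) :=
          mul_le_mul_left (hα2 n) _
      _ ≤ 2 * δ := mul_le_mul_right ((hd.trans hd2).trans hk.le) 2
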